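/- There is a constant c such that, in any CL5⁻ proof of a formula F of length k that contains no application of the empty cirquent axiom, the number of applications of ogroup weakening is at most c·k³. -/
import Mathlib


namespace CirquentCalc

/-- Formulas: literals (negation applied only to atoms), ∧, ∨. -/
inductive Fml where
  | pos : ℕ → Fml
  | neg : ℕ → Fml
  | and : Fml → Fml → Fml
  | or : Fml → Fml → Fml
deriving DecidableEq

namespace Fml

/-- Negation (pushed to atoms, as ¬ applies only to atoms). -/
def negate : Fml → Fml
  | pos n => neg n
  | neg n => pos n
  | and a b => or a.negate b.negate
  | or a b => and a.negate b.negate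

/-- Substitution extended homomorphically. -/
def subst (σ : ℕ → Fml) : Fml → Fml
  | pos n => σ n
  | neg n => (σ n).negate
  | and a b => and (a.subst σ) (b.subst σ)
  | or a b => or (a.subst σ) (b.subst σ)

/-- Classical evaluation under a truth assignment. -/
def eval (v : ℕ → Bool) : Fml → Bool
  | pos n => v n
  | neg n => !(v n)
  | and a b => a.eval v && b.eval v
  | or a b => a.eval v || b.eval v

/-- Number of positive occurrences of atom `a`. -/
def cPos (a : ℕ) : Fml → ℕ
  | pos n => if n = a then 1 else 0
  | neg _ => 0
  | and f g => f.cPos a + g.cPos a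
  | or f g => f.cPos a + g.cPos a

/-- Number of negative occurrences of atom `a`. -/
def cNeg (a : ℕ) : Fml → ℕ
  | pos _ => 0
  | neg n => if n = a then 1 else 0
  | and f g => f.cNeg a + g.cNeg a
  | or f g => f.cNeg a + g.cNeg a

/-- Total number of positive occurrences of atoms. -/
def posOcc : Fml → ℕ
  | pos _ => 1
  | neg _ => 0
  | and f g => f.posOcc + g.posOcc
  | or f g => f.posOcc + g.posOcc

/-- Length: total number of occurrences of literals and connectives. -/
def len : Fml → ℕ
  | pos _ => 1
  | neg _ => 1
  | and f g => f.len + g.len + 1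
  | or f g => f.len + g.len + 1

/-- Number of occurrences of ∧. -/
def nAnd : Fml → ℕ
  | pos _ => 0
  | neg _ => 0
  | and f g => f.nAnd + g.nAnd + 1
  | or f g => f.nAnd + g.nAnd

/-- Number of occurrences of ∨. -/
def nOr : Fml → ℕ
  | pos _ => 0
  | neg _ => 0
  | and f g => f.nOr + g.nOr
  | or f g => f.nOr + g.nOr + 1

end Fml

def Tautology (A : Fml) : Prop := ∀ v, A.eval v = true

/-- No atom has more than two occurrences. -/
def Binary (A : Fml) : Prop := ∀ a, A.cPos a + A.cNeg a ≤ 2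

/-- Whenever an atom occurs twice, one occurrence is positive and one negative. -/
def Normal (A : Fml) : Prop := ∀ a, A.cPos a ≤ 1 ∧ A.cNeg a ≤ 1

def AtomicLevel (σ : ℕ → Fml) : Prop := ∀ n, ∃ m, σ n = Fml.pos m

/-- `F` is an instance of `B`: σ(B) = F for some substitution σ. -/
def InstanceOf (F B : Fml) : Prop := ∃ σ, B.subst σ = F

/-- `F` is an atomic-level instance of `B`. -/
def AtomicInstanceOf (F B : Fml) : Prop := ∃ σ, AtomicLevel σ ∧ B.subst σ = F

/-- A cirquent: a pool of (occurrences of) formulas, and a list of ogroups,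
each an (index-)set of oformulas of the pool. -/
structure Cirquent where
  pool : List Fml
  groups : List (Finset ℕ)

def emptyCirquent : Cirquent := ⟨[], []⟩

def idCirquent (F : Fml) : Cirquent := ⟨[F.negate, F], [{0, 1}]⟩

/-- The cirquent with pool ⟨F⟩ and one ogroup containing F. -/
def fmlCirquent (F : Fml) : Cirquent := ⟨[F], [{0}]⟩

/-- Index renaming swapping `i` and `i+1`. -/
def swapIdx (i : ℕ) : ℕ → ℕ := fun j => if j = i then i + 1 else if j = i + 1 then i else j

/-- Index renaming when a new oformula is inserted at position `i`. -/
def insShift (i : ℕ) : ℕ → ℕ := fun j => if j < i then j else j + 1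

/-- Index renaming when the oformulas at positions `i`, `i+1` are merged into one at `i`. -/
def mergeIdx (i : ℕ) : ℕ → ℕ := fun j => if j ≤ i then j else j - 1

/-- Mix: placing the two premise cirquents side by side. -/
def MixStep (A B C : Cirquent) : Prop :=
  C.pool = A.pool ++ B.pool ∧
  C.groups = A.groups ++ B.groups.map (Finset.image (· + A.pool.length))

/-- Oformula exchange: swap two adjacent oformulas, preserving containment. -/
def OfExchStep (P C : Cirquent) : Prop :=
  ∃ (l₁ l₂ : List Fml) (F G : Fml),
    P.pool = l₁ ++ F :: G :: l₂ ∧ C.pool = l₁ ++ G :: F :: l₂ ∧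
    C.groups = P.groups.map (Finset.image (swapIdx l₁.length))

/-- Ogroup exchange: swap two adjacent ogroups. -/
def OgExchStep (P C : Cirquent) : Prop :=
  C.pool = P.pool ∧
  ∃ (g₁ g₂ : List (Finset ℕ)) (Γ Δ : Finset ℕ),
    P.groups = g₁ ++ Γ :: Δ :: g₂ ∧ C.groups = g₁ ++ Δ :: Γ :: g₂

/-- Pool weakening: insert a new oformula, contained in no ogroup. -/
def PoolWeakStep (P C : Cirquent) : Prop :=
  ∃ (l₁ l₂ : List Fml) (F : Fml),
    P.pool = l₁ ++ l₂ ∧ C.pool = l₁ ++ F :: l₂ ∧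
    C.groups = P.groups.map (Finset.image (insShift l₁.length))

/-- Ogroup weakening: add a new arc between a pre-existing ogroup and oformula. -/
def OgWeakStep (P C : Cirquent) : Prop :=
  C.pool = P.pool ∧
  ∃ (g₁ g₂ : List (Finset ℕ)) (Γ : Finset ℕ) (j : ℕ),
    j < P.pool.length ∧ j ∉ Γ ∧
    P.groups = g₁ ++ Γ :: g₂ ∧ C.groups = g₁ ++ insert j Γ :: g₂

/-- Downward duplication: replace an ogroup by two adjacent copies of it. -/
def DupDownStep (P C : Cirquent) : Prop :=
  C.pool = P.pool ∧
  ∃ (g₁ g₂ : List (Finset ℕ)) (Γ : Finset ℕ),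
    P.groups = g₁ ++ Γ :: g₂ ∧ C.groups = g₁ ++ Γ :: Γ :: g₂

/-- Upward duplication: the converse of downward duplication. -/
def DupUpStep (P C : Cirquent) : Prop :=
  C.pool = P.pool ∧
  ∃ (g₁ g₂ : List (Finset ℕ)) (Γ : Finset ℕ),
    P.groups = g₁ ++ Γ :: Γ :: g₂ ∧ C.groups = g₁ ++ Γ :: g₂

/-- ∨-introduction: merge two adjacent oformulas F, G into F ∨ G. -/
def OrIntroStep (P C : Cirquent) : Prop :=
  ∃ (l₁ l₂ : List Fml) (F G : Fml),
    P.pool = l₁ ++ F :: G :: l₂ ∧ C.pool = l₁ ++ (Fml.or F G) :: l₂ ∧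
    C.groups = P.groups.map (Finset.image (mergeIdx l₁.length))

/-- The merging of the ogroup list in ∧-introduction: no ogroup contains both `i`
and `i+1`; every ogroup containing `i` is immediately followed by one containing
`i+1` and vice versa; such pairs are merged. -/
inductive AndMerge (i : ℕ) : List (Finset ℕ) → List (Finset ℕ) → Prop where
  | nil : AndMerge i [] []
  | skip {Γ : Finset ℕ} {l l' : List (Finset ℕ)} :
      i ∉ Γ → (i + 1) ∉ Γ → AndMerge i l l' → AndMerge i (Γ :: l) (Γ :: l')
  | merge {Γ Δ : Finset ℕ} {l l' : List (Finset ℕ)} :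
      i ∈ Γ → (i + 1) ∉ Γ → (i + 1) ∈ Δ → i ∉ Δ →
      AndMerge i l l' → AndMerge i (Γ :: Δ :: l) ((Γ ∪ Δ) :: l')

/-- ∧-introduction. -/
def AndIntroStep (P C : Cirquent) : Prop :=
  ∃ (l₁ l₂ : List Fml) (F G : Fml) (merged : List (Finset ℕ)),
    P.pool = l₁ ++ F :: G :: l₂ ∧ C.pool = l₁ ++ (Fml.and F G) :: l₂ ∧
    AndMerge l₁.length P.groups merged ∧
    C.groups = merged.map (Finset.image (mergeIdx l₁.length))

inductive RuleName where
  | emptyAx | idAx | mix | ofExch | ogExch | poolWeak | ogWeak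
  | dupDown | dupUp | orIntro | andIntro
deriving DecidableEq

/-- The unary (one-premise) rules, by name. -/
def unRel : RuleName → Cirquent → Cirquent → Prop
  | .ofExch => OfExchStep
  | .ogExch => OgExchStep
  | .poolWeak => PoolWeakStep
  | .ogWeak => OgWeakStep
  | .dupDown => DupDownStep
  | .dupUp => DupUpStep
  | .orIntro => OrIntroStep
  | .andIntro => AndIntroStep
  | _ => fun _ _ => False

/-- Proof trees: each node is labeled by its cirquent and the rule used. -/
inductive PTree where
  | leaf (C : Cirquent) (r : RuleName)
  | un (C : Cirquent) (r : RuleName) (p : PTree)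
  | bin (C : Cirquent) (r : RuleName) (p q : PTree)

namespace PTree

def concl : PTree → Cirquent
  | leaf C _ => C
  | un C _ _ => C
  | bin C _ _ _ => C

/-- Validity: each node follows from its children by the named rule. -/
def Valid : PTree → Prop
  | leaf C r =>
      (r = .emptyAx ∧ C = emptyCirquent) ∨ (r = .idAx ∧ ∃ F, C = idCirquent F)
  | un C r p => p.Valid ∧ unRel r p.concl C
  | bin C r p q => p.Valid ∧ q.Valid ∧ r = .mix ∧ MixStep p.concl q.concl C

/-- Number of applications of rule `r` in the proof. -/
def count (r : RuleName) : PTree → ℕ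
  | leaf _ r' => if r' = r then 1 else 0
  | un _ r' p => (if r' = r then 1 else 0) + p.count r
  | bin _ r' p q => (if r' = r then 1 else 0) + p.count r + q.count r

/-- The cirquents occurring in the proof. -/
def cirquents : PTree → List Cirquent
  | leaf C _ => [C]
  | un C _ p => C :: p.cirquents
  | bin C _ p q => C :: (p.cirquents ++ q.cirquents)

/-- Total number of rule applications (nodes). -/
def nodes : PTree → ℕ
  | leaf _ _ => 1
  | un _ _ p => p.nodes + 1
  | bin _ _ p q => p.nodes + q.nodes + 1

/-- Number of leaves of the proof tree. -/
def leavesCount : PTree → ℕ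
  | leaf _ _ => 1
  | un _ _ p => p.leavesCount
  | bin _ _ p q => p.leavesCount + q.leavesCount

end PTree

/-- A proof uses no duplication. -/
def DupFree (p : PTree) : Prop :=
  p.count RuleName.dupDown = 0 ∧ p.count RuleName.dupUp = 0

/-- Provability of a cirquent in CL5. -/
def ProvesC (C : Cirquent) : Prop := ∃ p : PTree, p.Valid ∧ p.concl = C

/-- Provability of a formula in CL5. -/
def ProvesCL5 (F : Fml) : Prop := ∃ p : PTree, p.Valid ∧ p.concl = fmlCirquent F

/-- Provability of a formula in CL5⁻ (CL5 without duplication). -/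
def ProvesCL5m (F : Fml) : Prop :=
  ∃ p : PTree, p.Valid ∧ DupFree p ∧ p.concl = fmlCirquent F

/-- Number of arcs of a cirquent (sum of the sizes of its ogroups). -/
def Cirquent.arcs (C : Cirquent) : ℕ := (C.groups.map Finset.card).sum

/-- Size of a cirquent: sum of the lengths of the oformulas in its pool plus
the sum of the sizes of its ogroups. -/
def Cirquent.size (C : Cirquent) : ℕ := (C.pool.map Fml.len).sum + C.arcs

/-- Size of a proof: the sum of the sizes of the cirquents it contains. -/
def PTree.size (p : PTree) : ℕ := (p.cirquents.map Cirquent.size).sum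

/-- Total number of positive occurrences of atoms in the pool. -/
def Cirquent.poolPosOcc (C : Cirquent) : ℕ := (C.pool.map Fml.posOcc).sum

end CirquentCalc

namespace CirquentCalc

/-! ### Auxiliary lemmas for the ogroup-weakening bound -/

lemma Fml.len_pos (F : Fml) : 1 ≤ F.len := by
  induction F <;> simp [Fml.len] <;> omega

lemma Fml.len_negate (F : Fml) : F.negate.len = F.len := by
  induction F <;> simp [Fml.negate, Fml.len, *]

lemma Fml.conn_le_len (F : Fml) : F.nAnd + F.nOr ≤ F.len := by
  induction F <;> simp [Fml.nAnd, Fml.nOr, Fml.len] <;> omega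

/-- total length of the pool -/
def plen (C : Cirquent) : ℕ := (C.pool.map Fml.len).sum
/-- total number of ∧'s in the pool -/
def aS (C : Cirquent) : ℕ := (C.pool.map Fml.nAnd).sum
/-- total number of ∨'s in the pool -/
def oS (C : Cirquent) : ℕ := (C.pool.map Fml.nOr).sum
/-- all ogroups only mention actual pool positions -/
def GB (C : Cirquent) : Prop := ∀ g ∈ C.groups, g ⊆ Finset.range C.pool.length

lemma length_le_plen (l : List Fml) : l.length ≤ (l.map Fml.len).sum := by
  induction l with
  | nil => simp
  | cons a t ih => have := Fml.len_pos a; simp only [List.map_cons, List.sum_cons,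
      List.length_cons]; omega

lemma sum_card_le (gs : List (Finset ℕ)) (n : ℕ) (h : ∀ g ∈ gs, g ⊆ Finset.range n) :
    (gs.map Finset.card).sum ≤ gs.length * n := by
  induction gs with
  | nil => simp
  | cons g t ih =>
    have h1 : g.card ≤ n := by
      have := Finset.card_le_card (h g (by simp)); simpa using this
    have h2 := ih (fun g hg => h g (by simp [hg]))
    have h3 : (t.length + 1) * n = t.length * n + n := by ring
    simp only [List.map_cons, List.sum_cons, List.length_cons]
    omega

lemma sum_card_map_image {f : ℕ → ℕ} (hf : Function.Injective f) (gs : List (Finset ℕ)) :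
    ((gs.map (Finset.image f)).map Finset.card).sum = (gs.map Finset.card).sum := by
  induction gs with
  | nil => rfl
  | cons g t ih =>
      simp only [List.map_cons, List.sum_cons, Finset.card_image_of_injective _ hf, ih]

lemma swapIdx_invol (i j : ℕ) : swapIdx i (swapIdx i j) = j := by
  unfold swapIdx; split_ifs <;> omega

lemma swapIdx_inj (i : ℕ) : Function.Injective (swapIdx i) :=
  Function.LeftInverse.injective (swapIdx_invol i)

lemma insShift_inj (i : ℕ) : Function.Injective (insShift i) := by
  intro a b h; unfold insShift at h; split_ifs at h <;> omega

lemma image_subset_range {f : ℕ → ℕ} {g : Finset ℕ} {n m : ℕ}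
    (hg : g ⊆ Finset.range n) (hf : ∀ j < n, f j < m) :
    g.image f ⊆ Finset.range m := by
  intro x hx
  simp only [Finset.mem_image] at hx
  obtain ⟨j, hj, rfl⟩ := hx
  have := hg hj
  simp only [Finset.mem_range] at this ⊢
  exact hf j this

lemma andMerge_len {i : ℕ} {l l' : List (Finset ℕ)} (h : AndMerge i l l') :
    l'.length ≤ l.length := by
  induction h <;> simp <;> omega

lemma andMerge_subset {i : ℕ} {l l' : List (Finset ℕ)} (h : AndMerge i l l') (n : ℕ) :
    (∀ g ∈ l, g ⊆ Finset.range n) → ∀ g ∈ l', g ⊆ Finset.range n := by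
  induction h with
  | nil => intro _ g hg; simp at hg
  | skip _ _ _ ih =>
      intro hl g hg
      rcases List.mem_cons.mp hg with rfl | hg
      · exact hl _ (by simp)
      · exact ih (fun g hg => hl g (by simp [hg])) g hg
  | merge _ _ _ _ _ ih =>
      intro hl g hg
      rcases List.mem_cons.mp hg with rfl | hg
      · exact Finset.union_subset (hl _ (by simp)) (hl _ (by simp [List.mem_cons]))
      · exact ih (fun g hg => hl g (by simp [List.mem_cons, hg])) g hg

lemma mergeIdx_lt {i n : ℕ} (hi : i + 1 < n) : ∀ j < n, mergeIdx i j < n - 1 := by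
  intro j hj; unfold mergeIdx; split_ifs <;> omega


lemma arcs_le_of_GB {C : Cirquent} (h : GB C) :
    C.arcs ≤ C.groups.length * C.pool.length :=
  sum_card_le _ _ h

lemma mix_facts {A B C : Cirquent} (h : MixStep A B C) :
    plen C = plen A + plen B ∧ aS C = aS A + aS B ∧ oS C = oS A + oS B ∧
    C.groups.length = A.groups.length + B.groups.length ∧
    C.arcs = A.arcs + B.arcs ∧ (GB A → GB B → GB C) := by
  obtain ⟨hp, hg⟩ := h
  have hinj : Function.Injective (· + A.pool.length) := fun a b hab => by
    simpa using hab
  refine ⟨?_, ?_, ?_, ?_, ?_, ?_⟩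
  · simp [plen, hp]
  · simp [aS, hp]
  · simp [oS, hp]
  · simp [hg]
  · simp only [Cirquent.arcs, hg, List.map_append, List.sum_append]
    rw [sum_card_map_image hinj]
  · intro hA hB g hgmem
    rw [hg] at hgmem
    have hlen : C.pool.length = A.pool.length + B.pool.length := by simp [hp]
    rw [hlen]
    rcases List.mem_append.mp hgmem with hin | hin
    · exact (hA g hin).trans (Finset.range_subset_range.mpr (by omega))
    · obtain ⟨g0, hg0, rfl⟩ := List.mem_map.mp hin
      exact image_subset_range (hB g0 hg0) (fun j hj => by omega)

lemma ofExch_facts {P C : Cirquent} (h : OfExchStep P C) :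
    plen C = plen P ∧ aS C = aS P ∧ oS C = oS P ∧
    C.groups.length = P.groups.length ∧ C.arcs = P.arcs ∧ (GB P → GB C) := by
  obtain ⟨l₁, l₂, F, G, hP, hC, hG⟩ := h
  refine ⟨?_, ?_, ?_, ?_, ?_, ?_⟩
  · simp [plen, hP, hC] <;> omega
  · simp [aS, hP, hC] <;> omega
  · simp [oS, hP, hC] <;> omega
  · simp [hG]
  · simp only [Cirquent.arcs, hG]; exact sum_card_map_image (swapIdx_inj _) _
  · intro hGB g hg
    rw [hG] at hg
    obtain ⟨g0, hg0, rfl⟩ := List.mem_map.mp hg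
    have hn : C.pool.length = P.pool.length := by simp [hP, hC]
    rw [hn]
    refine image_subset_range (hGB g0 hg0) (fun j hj => ?_)
    have hlen : l₁.length + 1 < P.pool.length := by simp [hP]
    unfold swapIdx; split_ifs <;> omega

lemma ogExch_facts {P C : Cirquent} (h : OgExchStep P C) :
    C.pool = P.pool ∧ C.groups.length = P.groups.length ∧ C.arcs = P.arcs ∧
    (GB P → GB C) := by
  obtain ⟨hp, g₁, g₂, Γ, Δ, hPg, hCg⟩ := h
  refine ⟨hp, ?_, ?_, ?_⟩
  · simp [hPg, hCg]
  · simp only [Cirquent.arcs, hPg, hCg, List.map_append, List.sum_append,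
      List.map_cons, List.sum_cons]
    omega
  · intro hGB g hg
    rw [hp]
    apply hGB
    rw [hCg] at hg
    rw [hPg]
    simp only [List.mem_append, List.mem_cons] at hg ⊢
    tauto

lemma poolWeak_facts {P C : Cirquent} (h : PoolWeakStep P C) :
    plen P ≤ plen C ∧ aS P ≤ aS C ∧ oS P ≤ oS C ∧
    C.groups.length = P.groups.length ∧ C.arcs = P.arcs ∧ (GB P → GB C) := by
  obtain ⟨l₁, l₂, F, hP, hC, hG⟩ := h
  refine ⟨?_, ?_, ?_, ?_, ?_, ?_⟩
  · simp [plen, hP, hC] <;> omega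
  · simp [aS, hP, hC] <;> omega
  · simp [oS, hP, hC] <;> omega
  · simp [hG]
  · simp only [Cirquent.arcs, hG]; exact sum_card_map_image (insShift_inj _) _
  · intro hGB g hg
    rw [hG] at hg
    obtain ⟨g0, hg0, rfl⟩ := List.mem_map.mp hg
    have hn : C.pool.length = P.pool.length + 1 := by simp [hP, hC]; omega
    rw [hn]
    refine image_subset_range (hGB g0 hg0) (fun j hj => ?_)
    unfold insShift; split_ifs <;> omega

lemma ogWeak_facts {P C : Cirquent} (h : OgWeakStep P C) :
    C.pool = P.pool ∧ C.groups.length = P.groups.length ∧ C.arcs = P.arcs + 1 ∧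
    (GB P → GB C) := by
  obtain ⟨hp, g₁, g₂, Γ, j, hj, hjΓ, hPg, hCg⟩ := h
  refine ⟨hp, ?_, ?_, ?_⟩
  · simp [hPg, hCg]
  · simp only [Cirquent.arcs, hPg, hCg, List.map_append, List.sum_append,
      List.map_cons, List.sum_cons, Finset.card_insert_of_notMem hjΓ]
    omega
  · intro hGB g hg
    rw [hp]
    rw [hCg] at hg
    rcases List.mem_append.mp hg with hin | hin
    · exact hGB g (by rw [hPg]; exact List.mem_append.mpr (Or.inl hin))
    · rcases List.mem_cons.mp hin with rfl | hin
      · refine Finset.insert_subset (by simpa using hj) ?_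
        exact hGB Γ (by rw [hPg]; simp)
      · exact hGB g (by rw [hPg]; simp [hin])

lemma orIntro_facts {P C : Cirquent} (h : OrIntroStep P C) :
    plen C = plen P + 1 ∧ aS C = aS P ∧ oS C = oS P + 1 ∧
    C.groups.length = P.groups.length ∧ (GB P → GB C) := by
  obtain ⟨l₁, l₂, F, G, hP, hC, hG⟩ := h
  refine ⟨?_, ?_, ?_, ?_, ?_⟩
  · simp [plen, hP, hC, Fml.len] <;> omega
  · simp [aS, hP, hC, Fml.nAnd] <;> omega
  · simp [oS, hP, hC, Fml.nOr] <;> omega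
  · simp [hG]
  · intro hGB g hg
    rw [hG] at hg
    obtain ⟨g0, hg0, rfl⟩ := List.mem_map.mp hg
    have hnP : P.pool.length = l₁.length + l₂.length + 2 := by simp [hP] <;> omega
    have hnC : C.pool.length = l₁.length + l₂.length + 1 := by simp [hC] <;> omega
    rw [hnC]
    refine image_subset_range (hGB g0 hg0) (fun j hj => ?_)
    rw [hnP] at hj
    unfold mergeIdx; split_ifs <;> omega

lemma andIntro_facts {P C : Cirquent} (h : AndIntroStep P C) :
    plen C = plen P + 1 ∧ aS C = aS P + 1 ∧ oS C = oS P ∧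
    C.groups.length ≤ P.groups.length ∧ (GB P → GB C) := by
  obtain ⟨l₁, l₂, F, G, merged, hP, hC, hM, hG⟩ := h
  refine ⟨?_, ?_, ?_, ?_, ?_⟩
  · simp [plen, hP, hC, Fml.len] <;> omega
  · simp [aS, hP, hC, Fml.nAnd] <;> omega
  · simp [oS, hP, hC, Fml.nOr] <;> omega
  · rw [hG]; simpa using andMerge_len hM
  · intro hGB g hg
    rw [hG] at hg
    obtain ⟨g0, hg0, rfl⟩ := List.mem_map.mp hg
    have hnP : P.pool.length = l₁.length + l₂.length + 2 := by simp [hP] <;> omega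
    have hnC : C.pool.length = l₁.length + l₂.length + 1 := by simp [hC] <;> omega
    rw [hnC]
    have hg0sub : g0 ⊆ Finset.range P.pool.length :=
      andMerge_subset hM _ hGB g0 hg0
    refine image_subset_range hg0sub (fun j hj => ?_)
    rw [hnP] at hj
    unfold mergeIdx; split_ifs <;> omega

lemma leaves_pos (p : PTree) : 1 ≤ p.leavesCount := by
  induction p <;> simp [PTree.leavesCount] <;> omega

lemma concl_un (C : Cirquent) (r : RuleName) (q : PTree) :
    (PTree.un C r q).concl = C := rfl
lemma concl_bin (C : Cirquent) (r : RuleName) (q1 q2 : PTree) :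
    (PTree.bin C r q1 q2).concl = C := rfl
lemma concl_leaf (C : Cirquent) (r : RuleName) :
    (PTree.leaf C r).concl = C := rfl

/-- Main invariant, proved by induction on the proof tree. -/
lemma key_invariant (p : PTree) : p.Valid →
    p.count RuleName.dupDown = 0 → p.count RuleName.dupUp = 0 →
    p.count RuleName.emptyAx = 0 →
    GB p.concl ∧
    p.concl.groups.length ≤ p.leavesCount ∧
    2 * p.leavesCount ≤ plen p.concl ∧
    p.count RuleName.andIntro ≤ aS p.concl ∧
    p.count RuleName.orIntro ≤ oS p.concl ∧
    p.count RuleName.ogWeak + 2 * p.leavesCount ≤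
      p.concl.arcs +
      (p.count RuleName.andIntro + p.count RuleName.orIntro) *
        (p.leavesCount * plen p.concl) := by
  induction p with
  | leaf C r =>
    intro hv _ _ he
    rcases hv with ⟨rfl, rfl⟩ | ⟨rfl, F, rfl⟩
    · simp [PTree.count] at he
    · refine ⟨?_, ?_, ?_, ?_, ?_, ?_⟩
      · intro g hg
        simp only [concl_leaf, idCirquent, List.mem_singleton] at hg ⊢
        subst hg
        simp only [List.length_cons, List.length_nil]
        decide
      · simp [concl_leaf, idCirquent, PTree.leavesCount]
      · have := Fml.len_pos F
        simp only [concl_leaf, idCirquent, PTree.leavesCount, plen,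
          List.map_cons, List.map_nil, List.sum_cons, List.sum_nil,
          Fml.len_negate]
        omega
      · simp [PTree.count]
      · simp [PTree.count]
      · have harc : (idCirquent F).arcs = 2 := by
          simp [Cirquent.arcs, idCirquent]
        simp only [PTree.count, PTree.leavesCount, concl_leaf, harc, reduceIte,
          reduceCtorEq, if_false]
        omega
  | un C r q ih =>
    intro hv hd1 hd2 he
    obtain ⟨hqv, hrel⟩ := hv
    simp only [PTree.count] at hd1 hd2 he
    have hqd1 : q.count RuleName.dupDown = 0 := by omega
    have hqd2 : q.count RuleName.dupUp = 0 := by omega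
    have hqe : q.count RuleName.emptyAx = 0 := by omega
    obtain ⟨ih1, ih2, ih3, ih4, ih5, ih6⟩ := ih hqv hqd1 hqd2 hqe
    cases r with
    | emptyAx => exact hrel.elim
    | idAx => exact hrel.elim
    | mix => exact hrel.elim
    | dupDown => simp only [reduceIte] at hd1; exact absurd hd1 (by omega)
    | dupUp => simp only [reduceIte] at hd2; exact absurd hd2 (by omega)
    | ofExch =>
      obtain ⟨e1, e2, e3, e4, e5, e6⟩ := ofExch_facts (P := q.concl) (C := C) hrel
      simp only [concl_un, PTree.count, PTree.leavesCount, reduceIte,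
        reduceCtorEq, if_false, Nat.zero_add]
      rw [e1, e2, e3, e4, e5]
      exact ⟨e6 ih1, ih2, ih3, ih4, ih5, ih6⟩
    | ogExch =>
      obtain ⟨e1, e2, e3, e4⟩ := ogExch_facts (P := q.concl) (C := C) hrel
      have ep : plen C = plen q.concl := by rw [plen, plen, e1]
      have ea : aS C = aS q.concl := by rw [aS, aS, e1]
      have eo : oS C = oS q.concl := by rw [oS, oS, e1]
      simp only [concl_un, PTree.count, PTree.leavesCount, reduceIte,
        reduceCtorEq, if_false, Nat.zero_add]
      rw [ep, ea, eo, e2, e3]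
      exact ⟨e4 ih1, ih2, ih3, ih4, ih5, ih6⟩
    | poolWeak =>
      obtain ⟨e1, e2, e3, e4, e5, e6⟩ := poolWeak_facts (P := q.concl) (C := C) hrel
      simp only [concl_un, PTree.count, PTree.leavesCount, reduceIte,
        reduceCtorEq, if_false, Nat.zero_add]
      refine ⟨e6 ih1, by omega, by omega, by omega, by omega, ?_⟩
      have hmul : (q.count RuleName.andIntro + q.count RuleName.orIntro) *
          (q.leavesCount * plen q.concl) ≤
          (q.count RuleName.andIntro + q.count RuleName.orIntro) *
          (q.leavesCount * plen C) :=
        Nat.mul_le_mul_left _ (Nat.mul_le_mul_left _ e1)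
      rw [e5]
      omega
    | ogWeak =>
      obtain ⟨e1, e2, e3, e4⟩ := ogWeak_facts (P := q.concl) (C := C) hrel
      have ep : plen C = plen q.concl := by rw [plen, plen, e1]
      have ea : aS C = aS q.concl := by rw [aS, aS, e1]
      have eo : oS C = oS q.concl := by rw [oS, oS, e1]
      simp only [concl_un, PTree.count, PTree.leavesCount, reduceIte,
        reduceCtorEq, if_false, Nat.zero_add]
      rw [ep, ea, eo, e2, e3]
      exact ⟨e4 ih1, ih2, ih3, ih4, ih5, by omega⟩
    | orIntro =>
      obtain ⟨e1, e2, e3, e4, e5⟩ := orIntro_facts (P := q.concl) (C := C) hrel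
      simp only [concl_un, PTree.count, PTree.leavesCount, reduceIte,
        reduceCtorEq, if_false, Nat.zero_add]
      refine ⟨e5 ih1, by omega, by omega, by omega, by omega, ?_⟩
      have harcs : q.concl.arcs ≤ q.leavesCount * plen q.concl :=
        le_trans (arcs_le_of_GB ih1)
          (Nat.mul_le_mul ih2 (length_le_plen _))
      have h1 : q.count RuleName.ogWeak + 2 * q.leavesCount ≤
          (q.count RuleName.andIntro + q.count RuleName.orIntro + 1) *
            (q.leavesCount * plen q.concl) := by
        have hr : (q.count RuleName.andIntro + q.count RuleName.orIntro + 1) *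
            (q.leavesCount * plen q.concl) =
            q.leavesCount * plen q.concl +
            (q.count RuleName.andIntro + q.count RuleName.orIntro) *
              (q.leavesCount * plen q.concl) := by ring
        omega
      have h2 : (q.count RuleName.andIntro + q.count RuleName.orIntro + 1) *
          (q.leavesCount * plen q.concl) ≤
          (q.count RuleName.andIntro + (1 + q.count RuleName.orIntro)) *
            (q.leavesCount * plen C) := by
        apply Nat.mul_le_mul (by omega)
        exact Nat.mul_le_mul_left _ (by omega)
      omega
    | andIntro =>
      obtain ⟨e1, e2, e3, e4, e5⟩ := andIntro_facts (P := q.concl) (C := C) hrel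
      simp only [concl_un, PTree.count, PTree.leavesCount, reduceIte,
        reduceCtorEq, if_false, Nat.zero_add]
      refine ⟨e5 ih1, by omega, by omega, by omega, by omega, ?_⟩
      have harcs : q.concl.arcs ≤ q.leavesCount * plen q.concl :=
        le_trans (arcs_le_of_GB ih1)
          (Nat.mul_le_mul ih2 (length_le_plen _))
      have h1 : q.count RuleName.ogWeak + 2 * q.leavesCount ≤
          (q.count RuleName.andIntro + q.count RuleName.orIntro + 1) *
            (q.leavesCount * plen q.concl) := by
        have hr : (q.count RuleName.andIntro + q.count RuleName.orIntro + 1) *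
            (q.leavesCount * plen q.concl) =
            q.leavesCount * plen q.concl +
            (q.count RuleName.andIntro + q.count RuleName.orIntro) *
              (q.leavesCount * plen q.concl) := by ring
        omega
      have h2 : (q.count RuleName.andIntro + q.count RuleName.orIntro + 1) *
          (q.leavesCount * plen q.concl) ≤
          ((1 + q.count RuleName.andIntro) + q.count RuleName.orIntro) *
            (q.leavesCount * plen C) := by
        apply Nat.mul_le_mul (by omega)
        exact Nat.mul_le_mul_left _ (by omega)
      omega
  | bin C r q1 q2 ihq1 ihq2 =>
    intro hv hd1 hd2 he
    obtain ⟨h1v, h2v, rfl, hmix⟩ := hv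
    simp only [PTree.count] at hd1 hd2 he
    obtain ⟨a1, a2, a3, a4, a5, a6⟩ := ihq1 h1v (by omega) (by omega) (by omega)
    obtain ⟨b1, b2, b3, b4, b5, b6⟩ := ihq2 h2v (by omega) (by omega) (by omega)
    obtain ⟨e1, e2, e3, e4, e5, e6⟩ := mix_facts (A := q1.concl) (B := q2.concl)
      (C := C) hmix
    simp only [concl_bin, PTree.count, PTree.leavesCount, reduceIte,
      reduceCtorEq, if_false, Nat.zero_add]
    refine ⟨e6 a1 b1, by omega, by omega, by omega, by omega, ?_⟩
    have hm1 : (q1.count RuleName.andIntro + q1.count RuleName.orIntro) *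
        (q1.leavesCount * plen q1.concl) ≤
        (q1.count RuleName.andIntro + q1.count RuleName.orIntro) *
        ((q1.leavesCount + q2.leavesCount) * plen C) := by
      apply Nat.mul_le_mul_left
      apply Nat.mul_le_mul (by omega) (by omega)
    have hm2 : (q2.count RuleName.andIntro + q2.count RuleName.orIntro) *
        (q2.leavesCount * plen q2.concl) ≤
        (q2.count RuleName.andIntro + q2.count RuleName.orIntro) *
        ((q1.leavesCount + q2.leavesCount) * plen C) := by
      apply Nat.mul_le_mul_left
      apply Nat.mul_le_mul (by omega) (by omega)
    have hring : (q1.count RuleName.andIntro + q2.count RuleName.andIntro +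
          (q1.count RuleName.orIntro + q2.count RuleName.orIntro)) *
          ((q1.leavesCount + q2.leavesCount) * plen C) =
        (q1.count RuleName.andIntro + q1.count RuleName.orIntro) *
          ((q1.leavesCount + q2.leavesCount) * plen C) +
        (q2.count RuleName.andIntro + q2.count RuleName.orIntro) *
          ((q1.leavesCount + q2.leavesCount) * plen C) := by ring
    omega

end CirquentCalc
open CirquentCalc

/-- There is a constant c such that any CL5⁻ proof of a formula F
of length k with no empty cirquent axiom uses at most c·k³ applications of
ogroup weakening. -/
theorem cl5m_ogroup_weakening_count :
    ∃ c : ℕ, ∀ (F : Fml) (p : PTree),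
      p.Valid → DupFree p → p.concl = fmlCirquent F →
      p.count RuleName.emptyAx = 0 →
      p.count RuleName.ogWeak ≤ c * F.len ^ 3 := by
  refine ⟨2, fun F p hv hdf hc he => ?_⟩
  obtain ⟨hd1, hd2⟩ := hdf
  obtain ⟨_, _, ih3, ih4, ih5, ih6⟩ := key_invariant p hv hd1 hd2 he
  rw [hc] at ih3 ih4 ih5 ih6
  have hplen : plen (fmlCirquent F) = F.len := by simp [plen, fmlCirquent]
  have haS : aS (fmlCirquent F) = F.nAnd := by simp [aS, fmlCirquent]
  have hoS : oS (fmlCirquent F) = F.nOr := by simp [oS, fmlCirquent]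
  have harcs : (fmlCirquent F).arcs = 1 := by simp [Cirquent.arcs, fmlCirquent]
  rw [hplen] at ih3 ih6
  rw [haS] at ih4
  rw [hoS] at ih5
  rw [harcs] at ih6
  have hconn := Fml.conn_le_len F
  have hI := leaves_pos p
  have hk := Fml.len_pos F
  have hb : (p.count RuleName.andIntro + p.count RuleName.orIntro) *
      (p.leavesCount * F.len) ≤ F.len * (F.len * F.len) :=
    Nat.mul_le_mul (by omega) (Nat.mul_le_mul (by omega) le_rfl)
  have hcube : F.len * (F.len * F.len) = F.len ^ 3 := by ring
  have hone : 1 ≤ F.len ^ 3 := Nat.one_le_pow _ _ (by omega)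
  omega
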